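/- Fix n ∈ ℕ and let G = (ℤ/2)^n with generators x_1,…,x_n. For each subset A ⊆ {1,…,n} set ξ_A = Σ_{g ∈ G_A} g in the group algebra F2[G], where G_A is the subgroup generated by {x_i : i ∈ A}. Then the family (ξ_A), indexed by all 2^n subsets A ⊆ {1,…,n}, is a basis of F2[G] as an F2-vector space. -/

import Mathlib

/-- The group `G = (ℤ/2)ⁿ`, written multiplicatively. -/
abbrev GrpG (n : ℕ) : Type := Multiplicative (Fin n → ZMod 2)

/-- The `i`-th generator `x_i` of `G = (ℤ/2)ⁿ`. -/
def xgen {n : ℕ} (i : Fin n) : GrpG n := Multiplicative.ofAdd (Pi.single i 1)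

/-- The subgroup `G_A ≤ G` generated by `{x_i : i ∈ A}`. -/
def GA {n : ℕ} (A : Finset (Fin n)) : Subgroup (GrpG n) :=
  Subgroup.closure (xgen '' (A : Set (Fin n)))

open scoped Classical in
/-- The element `ξ_A = ∑_{g ∈ G_A} g` of the group algebra `F2[G]`. -/
noncomputable def xiA {n : ℕ} (A : Finset (Fin n)) : MonoidAlgebra (ZMod 2) (GrpG n) :=
  ∑ g ∈ ((GA A : Set (GrpG n)).toFinset), MonoidAlgebra.of (ZMod 2) (GrpG n) g

/-- The indicator element of a subset `B`, as an element of `G`. -/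
noncomputable def eB {n : ℕ} (B : Finset (Fin n)) : GrpG n :=
  Multiplicative.ofAdd (fun i => if i ∈ B then 1 else 0)

lemma zmod2cases (a : ZMod 2) : a = 0 ∨ a = 1 := by revert a; decide

lemma mem_GA {n : ℕ} (A : Finset (Fin n)) (g : GrpG n) :
    g ∈ GA A ↔ ∀ i ∉ A, Multiplicative.toAdd g i = 0 := by
  constructor
  · intro hg
    refine Subgroup.closure_induction ?_ ?_ ?_ ?_ hg
    · rintro x ⟨i, hi, rfl⟩ j hj
      simp only [Finset.mem_coe] at hi
      have : j ≠ i := fun h => hj (h ▸ hi)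
      simp [xgen, Pi.single_apply, this]
    · intro i _; rfl
    · intro x y _ _ hx hy i hi
      have : Multiplicative.toAdd (x * y) = Multiplicative.toAdd x + Multiplicative.toAdd y := rfl
      rw [this]; simp [hx i hi, hy i hi]
    · intro x _ hx i hi
      have : Multiplicative.toAdd x⁻¹ = -Multiplicative.toAdd x := rfl
      rw [this]; simp [hx i hi]
  · intro h
    have key : Multiplicative.toAdd g = ∑ i ∈ A, Pi.single i (Multiplicative.toAdd g i) := by
      funext j
      rw [Finset.sum_apply]
      by_cases hj : j ∈ A
      · rw [Finset.sum_eq_single j]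
        · simp
        · intro b _ hb; simp [Pi.single_apply, hb.symm]
        · intro hj'; exact absurd hj hj'
      · simp only [Pi.single_apply]
        rw [Finset.sum_eq_zero (fun b hb => by
          have : j ≠ b := fun h => hj (h ▸ hb); simp [this])]
        exact h j hj
    have : g = ∏ i ∈ A, Multiplicative.ofAdd (Pi.single i (Multiplicative.toAdd g i)) := by
      rw [← ofAdd_sum, ← key]; rfl
    rw [this]
    refine Subgroup.prod_mem _ (fun i hi => ?_)
    rcases zmod2cases (Multiplicative.toAdd g i) with h0 | h1
    · rw [h0]; simp only [Pi.single_zero]; exact one_mem _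
    · rw [h1]
      exact Subgroup.subset_closure ⟨i, by simpa using hi, rfl⟩

lemma eB_injective {n : ℕ} : Function.Injective (eB (n := n)) := by
  intro B C h
  ext i
  have := congrFun (congrArg Multiplicative.toAdd h) i
  simp only [eB] at this
  by_cases hB : i ∈ B <;> by_cases hC : i ∈ C <;> simp_all

lemma setFinset_GA {n : ℕ} (A : Finset (Fin n)) [Fintype (GA A : Set (GrpG n))] :
    (GA A : Set (GrpG n)).toFinset = A.powerset.image eB := by
  ext g
  simp only [Set.mem_toFinset, SetLike.mem_coe, mem_GA, Finset.mem_image, Finset.mem_powerset]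
  constructor
  · intro h
    refine ⟨A.filter (fun i => Multiplicative.toAdd g i = 1), Finset.filter_subset _ _, ?_⟩
    apply Multiplicative.toAdd.injective
    funext i
    simp only [eB, Finset.mem_filter]
    by_cases hi : i ∈ A
    · rcases zmod2cases (Multiplicative.toAdd g i) with h0 | h1 <;> simp_all
    · simp [hi, h i hi]
  · rintro ⟨B, hBA, rfl⟩ i hi
    have : i ∉ B := fun h => hi (hBA h)
    simp [eB, this]

lemma xiA_eq {n : ℕ} (A : Finset (Fin n)) :
    xiA A = ∑ B ∈ A.powerset, MonoidAlgebra.of (ZMod 2) (GrpG n) (eB B) := by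
  classical
  rw [xiA, setFinset_GA, Finset.sum_image (fun a _ b _ h => eB_injective h)]

lemma pow_two_smul_zero {M : Type*} [AddCommMonoid M] [Module (ZMod 2) M]
    (k : ℕ) (hk : k ≠ 0) (v : M) : (2 ^ k) • v = 0 := by
  rw [← Nat.cast_smul_eq_nsmul (ZMod 2)]
  have h2 : ((2:ℕ):ZMod 2) = 0 := by decide
  rw [Nat.cast_pow, h2, zero_pow hk, zero_smul]

lemma double_sum {n : ℕ} {M : Type*} [AddCommMonoid M] [Module (ZMod 2) M]
    (A : Finset (Fin n)) (v : Finset (Fin n) → M) :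
    ∑ B ∈ A.powerset, ∑ C ∈ B.powerset, v C = v A := by
  classical
  have step1 : ∀ B ∈ A.powerset, ∑ C ∈ B.powerset, v C
      = ∑ C ∈ A.powerset, if C ∈ B.powerset then v C else 0 := by
    intro B hB
    rw [Finset.sum_ite_mem]
    congr 1
    ext C
    simp only [Finset.mem_inter, Finset.mem_powerset] at *
    exact ⟨fun h => ⟨h.trans hB, h⟩, fun h => h.2⟩
  rw [Finset.sum_congr rfl step1, Finset.sum_comm]
  have step2 : ∀ C ∈ A.powerset, ∑ B ∈ A.powerset, (if C ∈ B.powerset then v C else 0)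
      = (2 ^ (A.card - C.card)) • v C := by
    intro C hC
    rw [Finset.mem_powerset] at hC
    rw [← Finset.sum_filter, Finset.sum_const]
    congr 1
    have : A.powerset.filter (fun B => C ∈ B.powerset) = Finset.Icc C A := by
      ext B; simp [Finset.mem_powerset, Finset.mem_Icc, and_comm]
    rw [this, Finset.card_Icc_finset hC]
  rw [Finset.sum_congr rfl step2, Finset.sum_eq_single A]
  · simp
  · intro C hC hCA
    rw [Finset.mem_powerset] at hC
    apply pow_two_smul_zero
    have : C.card < A.card := Finset.card_lt_card (lt_of_le_of_ne hC hCA)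
    omega
  · intro h; exact absurd (Finset.mem_powerset.mpr le_rfl) h

noncomputable def eEquiv (n : ℕ) : Finset (Fin n) ≃ GrpG n where
  toFun := eB
  invFun g := Finset.univ.filter (fun i => Multiplicative.toAdd g i = 1)
  left_inv B := by
    ext i
    simp only [Finset.mem_filter, Finset.mem_univ, true_and, eB]
    by_cases h : i ∈ B <;> simp [h]
  right_inv g := by
    apply Multiplicative.toAdd.injective
    funext i
    simp only [eB, Finset.mem_filter, Finset.mem_univ, true_and]
    rcases zmod2cases (Multiplicative.toAdd g i) with h | h <;> simp [h]

noncomputable def b0 (n : ℕ) : Module.Basis (Finset (Fin n)) (ZMod 2) (MonoidAlgebra (ZMod 2) (GrpG n)) :=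
  (MonoidAlgebra.basis (GrpG n) (ZMod 2)).reindex (eEquiv n).symm

lemma b0_apply {n : ℕ} (A : Finset (Fin n)) :
    b0 n A = MonoidAlgebra.of (ZMod 2) (GrpG n) (eB A) := by
  unfold b0
  erw [Module.Basis.reindex_apply]
  rfl

lemma xiA_eq_b0 {n : ℕ} (A : Finset (Fin n)) : xiA A = ∑ B ∈ A.powerset, b0 n B := by
  rw [xiA_eq]; exact Finset.sum_congr rfl (fun B _ => (b0_apply B).symm)

/-- The family `(ξ_A)`, indexed by all `2ⁿ` subsets `A ⊆ {1,…,n}`, is a basis of the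
group algebra `F2[(ℤ/2)ⁿ]` as an `F2`-vector space. -/
theorem stmt11 (n : ℕ) :
    ∃ b : Module.Basis (Finset (Fin n)) (ZMod 2) (MonoidAlgebra (ZMod 2) (GrpG n)),
      ∀ A : Finset (Fin n), b A = xiA A := by
  set T : MonoidAlgebra (ZMod 2) (GrpG n) →ₗ[ZMod 2] MonoidAlgebra (ZMod 2) (GrpG n) :=
    (b0 n).constr ℕ (fun A => xiA A) with hT
  have hTb : ∀ A, T (b0 n A) = xiA A := fun A => Module.Basis.constr_basis _ _ _ _
  have hTT : T.comp T = LinearMap.id := by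
    apply (b0 n).ext
    intro A
    rw [LinearMap.comp_apply, hTb, LinearMap.id_apply, xiA_eq_b0, map_sum]
    calc ∑ B ∈ A.powerset, T (b0 n B) = ∑ B ∈ A.powerset, ∑ C ∈ B.powerset, b0 n C := by
          exact Finset.sum_congr rfl (fun B _ => by rw [hTb, xiA_eq_b0])
      _ = b0 n A := double_sum A _
  refine ⟨(b0 n).map (LinearEquiv.ofLinear T T hTT hTT), fun A => ?_⟩
  rw [Module.Basis.map_apply, LinearEquiv.ofLinear_apply, hTb]
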